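/- arXiv:1109.2481 — 6 statements merged into one kernel-verified Lean document; each statement's English description precedes it below -/
import Mathlib

section
/- Let n ≥ 1 and let V, X : ℝ → Matrix (Fin n) (Fin n) ℝ with V differentiable and X continuous, satisfying V'(t) = X(t)·V(t) + V(t)·X(t) and trace (X t) = 0 for all t ∈ ℝ. Then det (V t) = det (V 0) for all t ∈ ℝ. -/
open Matrix

attribute [local instance] Matrix.normedAddCommGroup Matrix.normedSpace

set_option maxHeartbeats 1000000

noncomputable def detCML (n : ℕ) :
    ContinuousMultilinearMap ℝ (fun _ : Fin n => (Fin n → ℝ)) ℝ :=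
  MultilinearMap.mkContinuous
    (Matrix.detRowAlternating : (Fin n → ℝ) [⋀^Fin n]→ₗ[ℝ] ℝ).toMultilinearMap
    (n.factorial) (by
      intro m
      have h1 : ∀ σ : Equiv.Perm (Fin n), ‖∏ i, m (σ i) i‖ ≤ ∏ i, ‖m i‖ := by
        intro σ
        calc ‖∏ i, m (σ i) i‖ ≤ ∏ i, ‖m (σ i) i‖ := (norm_prod _ _).le
          _ ≤ ∏ i, ‖m (σ i)‖ := by
              exact Finset.prod_le_prod (fun i _ => norm_nonneg _)
                (fun i _ => norm_le_pi_norm (m (σ i)) i)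
          _ = ∏ i, ‖m i‖ := Equiv.prod_comp σ (fun i => ‖m i‖)
      calc ‖Matrix.detRowAlternating m‖
          = ‖∑ σ : Equiv.Perm (Fin n), ((Equiv.Perm.sign σ : ℤ) : ℝ) * ∏ i, m (σ i) i‖ := by
            rw [show Matrix.detRowAlternating m = (Matrix.of m).det from rfl,
              Matrix.det_apply']
            rfl
        _ ≤ ∑ σ : Equiv.Perm (Fin n), ‖((Equiv.Perm.sign σ : ℤ) : ℝ) * ∏ i, m (σ i) i‖ :=
            norm_sum_le _ _
        _ ≤ ∑ σ : Equiv.Perm (Fin n), ∏ i, ‖m i‖ := by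
            refine Finset.sum_le_sum fun σ _ => ?_
            rw [norm_mul]
            calc ‖((Equiv.Perm.sign σ : ℤ) : ℝ)‖ * ‖∏ i, m (σ i) i‖
                ≤ 1 * ‖∏ i, m (σ i) i‖ := by
                  apply mul_le_mul_of_nonneg_right _ (norm_nonneg _)
                  rcases Int.units_eq_one_or (Equiv.Perm.sign σ) with h | h <;>
                    simp [h]
              _ = ‖∏ i, m (σ i) i‖ := one_mul _
              _ ≤ ∏ i, ‖m i‖ := h1 σ
        _ = (n.factorial : ℝ) * ∏ i, ‖m i‖ := by
            rw [Finset.sum_const, Finset.card_univ, Fintype.card_perm, Fintype.card_fin,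
              nsmul_eq_mul])

lemma detCML_apply (n : ℕ) (m : Fin n → (Fin n → ℝ)) :
    detCML n m = Matrix.det (Matrix.of m) := rfl

lemma sum_det_updateRow {n : ℕ} (A M : Matrix (Fin n) (Fin n) ℝ) :
    ∑ i, (A.updateRow i (M i)).det = (Matrix.adjugate A * M).trace := by
  have h : ∀ i, (A.updateRow i (M i)).det = Matrix.cramer Aᵀ (M i) i := fun i =>
    (Matrix.cramer_transpose_apply A (M i) i).symm
  simp_rw [h, Matrix.cramer_eq_adjugate_mulVec, ← Matrix.adjugate_transpose,
    Matrix.mulVec, dotProduct, Matrix.transpose_apply, Matrix.trace,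
    Matrix.diag, Matrix.mul_apply]
  rw [Finset.sum_comm]

/-- If `V` is a differentiable matrix-valued path solving `V' = X·V + V·X` with `X` continuous
and traceless, then `det (V t)` is constant. -/
theorem det_const_of_sandwich_ode_traceless (n : ℕ) (hn : 1 ≤ n)
    (V X : ℝ → Matrix (Fin n) (Fin n) ℝ)
    (hX : Continuous X)
    (hV : ∀ t : ℝ, HasDerivAt V (X t * V t + V t * X t) t)
    (htr : ∀ t : ℝ, (X t).trace = 0) :
    ∀ t : ℝ, (V t).det = (V 0).det := by
  have key : ∀ t : ℝ, HasDerivAt (fun t => (V t).det) 0 t := by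
    intro t
    set W : Matrix (Fin n) (Fin n) ℝ := X t * V t + V t * X t with hW
    have hf := (detCML n).hasFDerivAt (x := fun i => V t i)
    have hV' : HasDerivAt (fun s => (fun i => V s i : Fin n → Fin n → ℝ))
        (fun i => W i) t := hV t
    have hcomp := hf.comp_hasDerivAt t hV'
    have hderiv : HasDerivAt (fun s => (V s).det)
        (∑ i, ((V t).updateRow i (W i)).det) t := by
      have hcomp' : HasDerivAt (fun s => (V s).det)
          (((detCML n).linearDeriv fun i => V t i) fun i => W i) t := hcomp
      convert hcomp' using 1
      · simp only [ContinuousMultilinearMap.linearDeriv_apply]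
        rfl
    have hz : (∑ i, ((V t).updateRow i (W i)).det) = 0 := by
      rw [sum_det_updateRow, hW, Matrix.mul_add, ← Matrix.mul_assoc, ← Matrix.mul_assoc,
        Matrix.trace_add, Matrix.adjugate_mul, Matrix.trace_mul_cycle (Matrix.adjugate (V t)),
        Matrix.mul_adjugate]
      simp [Matrix.trace_smul, htr t]
    exact hz ▸ hderiv
  intro t
  exact is_const_of_deriv_eq_zero (f := fun u => (V u).det)
    (fun u => (key u).differentiableAt) (fun u => (key u).deriv) t 0
end

section
/- Let n ≥ 1 and T > 0. Let R : ℝ → Matrix (Fin n) (Fin n) ℝ be continuous with R(t) symmetric for every t. Let J : ℝ → Matrix (Fin n) (Fin n) ℝ be twice continuously differentiable with J''(t) + R(t)·J(t) = 0 for all t, J(0) = 0 and J'(0) = 1 (the identity matrix), and assume J(t) is invertible for all t ∈ (0, T]. Define E : (0, T] → Matrix (Fin n) (Fin n) ℝ by E(t) = J(t) · ∫_t^T J(s)⁻¹·(J(s)⁻¹)ᵀ ds. Then E is twice continuously differentiable on (0, T), satisfies E''(t) + R(t)·E(t) = 0 for all t ∈ (0, T), and E(T) = 0. -/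
open Matrix Set intervalIntegral

attribute [local instance] Matrix.normedAddCommGroup Matrix.normedSpace

namespace StableJacobiAux

variable {n : ℕ}

section

local instance matTop {n : ℕ} : TopologicalSpace (Matrix (Fin n) (Fin n) ℝ) :=
  PseudoMetricSpace.toUniformSpace.toTopologicalSpace

noncomputable def mulL (n : ℕ) :
    Matrix (Fin n) (Fin n) ℝ →L[ℝ] Matrix (Fin n) (Fin n) ℝ →L[ℝ] Matrix (Fin n) (Fin n) ℝ :=
  LinearMap.toContinuousLinearMap
    ((LinearMap.toContinuousLinearMap :
        (Matrix (Fin n) (Fin n) ℝ →ₗ[ℝ] Matrix (Fin n) (Fin n) ℝ) ≃ₗ[ℝ]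
          (Matrix (Fin n) (Fin n) ℝ →L[ℝ] Matrix (Fin n) (Fin n) ℝ)).toLinearMap.comp
      (LinearMap.mul ℝ (Matrix (Fin n) (Fin n) ℝ)))

@[simp] lemma mulL_apply (A B : Matrix (Fin n) (Fin n) ℝ) : mulL n A B = A * B := rfl

end

lemma matmul {f g : ℝ → Matrix (Fin n) (Fin n) ℝ}
    {f' g' : Matrix (Fin n) (Fin n) ℝ} {x : ℝ}
    (hf : HasDerivAt f f' x) (hg : HasDerivAt g g' x) :
    HasDerivAt (fun y => f y * g y) (f' * g x + f x * g') x := by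
  have hl : HasFDerivAt (mulL n) (mulL n) (f x) := (mulL n).hasFDerivAt
  have h1 := hl.comp_hasDerivAt x (by exact hf)
  have h2 := h1.clm_apply (by exact hg)
  exact h2

noncomputable def transL (n : ℕ) :
    Matrix (Fin n) (Fin n) ℝ →L[ℝ] Matrix (Fin n) (Fin n) ℝ :=
  LinearMap.toContinuousLinearMap
    { toFun := Matrix.transpose
      map_add' := fun A B => Matrix.transpose_add A B
      map_smul' := fun c A => Matrix.transpose_smul c A }

@[simp] lemma transL_apply (A : Matrix (Fin n) (Fin n) ℝ) : transL n A = Aᵀ := rfl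

lemma mtrans {f : ℝ → Matrix (Fin n) (Fin n) ℝ}
    {f' : Matrix (Fin n) (Fin n) ℝ} {x : ℝ} (hf : HasDerivAt f f' x) :
    HasDerivAt (fun y => (f y)ᵀ) f'ᵀ x := by
  exact (transL n).hasFDerivAt.comp_hasDerivAt x (by exact hf)

lemma hasDerivAt_matinv {J J' : ℝ → Matrix (Fin n) (Fin n) ℝ} {t : ℝ}
    (hJd : HasDerivAt J (J' t) t)
    (h : ∀ᶠ u in nhds t, IsUnit (J u))
    (hK : ContinuousAt (fun u => (J u)⁻¹) t) :
    HasDerivAt (fun u => (J u)⁻¹) (-((J t)⁻¹ * J' t * (J t)⁻¹)) t := by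
  refine hasDerivAt_iff_tendsto_slope.mpr ?_
  have hslopeJ : Filter.Tendsto (slope J t) (nhdsWithin t {t}ᶜ) (nhds (J' t)) :=
    hasDerivAt_iff_tendsto_slope.mp hJd
  have hKt : Filter.Tendsto (fun u => (J u)⁻¹) (nhdsWithin t {t}ᶜ) (nhds ((J t)⁻¹)) :=
    hK.tendsto.mono_left nhdsWithin_le_nhds
  have h2 : Filter.Tendsto (fun u => -((J u)⁻¹ * slope J t u * (J t)⁻¹))
      (nhdsWithin t {t}ᶜ) (nhds (-((J t)⁻¹ * J' t * (J t)⁻¹))) :=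
    ((hKt.mul hslopeJ).mul tendsto_const_nhds).neg
  refine h2.congr' ?_
  have ht : IsUnit (J t) := h.self_of_nhds
  filter_upwards [(h.filter_mono nhdsWithin_le_nhds),
    self_mem_nhdsWithin] with u hu (hne : u ∈ ({t}ᶜ : Set ℝ))
  have h1 : J u * (J u)⁻¹ = 1 := Matrix.mul_nonsing_inv _ ((Matrix.isUnit_iff_isUnit_det _).mp hu)
  have h1' : (J u)⁻¹ * J u = 1 := Matrix.nonsing_inv_mul _ ((Matrix.isUnit_iff_isUnit_det _).mp hu)
  have h3 : J t * (J t)⁻¹ = 1 := Matrix.mul_nonsing_inv _ ((Matrix.isUnit_iff_isUnit_det _).mp ht)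
  have key : (J u)⁻¹ - (J t)⁻¹ = (J u)⁻¹ * (J t - J u) * (J t)⁻¹ := by
    rw [mul_sub, sub_mul, mul_assoc, h3, mul_one, h1', one_mul]
  have hne' : u - t ≠ 0 := sub_ne_zero.mpr hne
  have e2 : slope (fun u => (J u)⁻¹) t u = (u - t)⁻¹ • ((J u)⁻¹ * (J t - J u) * (J t)⁻¹) := by
    rw [slope_def_module, key]
  have e3 : slope J t u = (u - t)⁻¹ • (J u - J t) := slope_def_module J t u
  rw [e2, e3, Matrix.mul_smul, Matrix.smul_mul, ← smul_neg]
  congr 1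
  rw [show J u - J t = -(J t - J u) from (neg_sub _ _).symm, mul_neg, neg_mul, neg_neg]

end StableJacobiAux

open StableJacobiAux

/-- The tensor `E(t) = J(t)·∫_t^T J(s)⁻¹·(J(s)⁻¹)ᵀ ds` built from the matrix Jacobi
tensor `J` is twice continuously differentiable on `(0,T)`, solves the Jacobi equation
`E'' + R·E = 0` there, and vanishes at `T`. -/
theorem stable_jacobi_tensor_eq (n : ℕ) (hn : 1 ≤ n) (T : ℝ) (hT : 0 < T)
    (R J J' J'' : ℝ → Matrix (Fin n) (Fin n) ℝ)
    (hRcont : Continuous R) (hRsymm : ∀ t : ℝ, (R t).IsSymm)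
    (hJd : ∀ t : ℝ, HasDerivAt J (J' t) t)
    (hJd2 : ∀ t : ℝ, HasDerivAt J' (J'' t) t)
    (hJ''cont : Continuous J'')
    (hJac : ∀ t : ℝ, J'' t + R t * J t = 0)
    (hJ0 : J 0 = 0) (hJ'0 : J' 0 = 1)
    (hinv : ∀ t ∈ Set.Ioc 0 T, IsUnit (J t)) :
    ∃ E' E'' : ℝ → Matrix (Fin n) (Fin n) ℝ,
      (∀ t ∈ Set.Ioo 0 T,
        HasDerivAt (fun u => J u * ∫ s in u..T, (J s)⁻¹ * ((J s)⁻¹)ᵀ) (E' t) t) ∧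
      (∀ t ∈ Set.Ioo 0 T, HasDerivAt E' (E'' t) t) ∧
      ContinuousOn E'' (Set.Ioo 0 T) ∧
      (∀ t ∈ Set.Ioo 0 T,
        E'' t + R t * (J t * ∫ s in t..T, (J s)⁻¹ * ((J s)⁻¹)ᵀ) = 0) ∧
      (J T * ∫ s in T..T, (J s)⁻¹ * ((J s)⁻¹)ᵀ) = 0 := by
  classical
  set K : ℝ → Matrix (Fin n) (Fin n) ℝ := fun s => (J s)⁻¹ with hK_def
  set g : ℝ → Matrix (Fin n) (Fin n) ℝ := fun s => (J s)⁻¹ * ((J s)⁻¹)ᵀ with hg_def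
  set F : ℝ → Matrix (Fin n) (Fin n) ℝ := fun u => ∫ s in u..T, g s with hF_def
  have hJcont : Continuous J := by
    rw [continuous_iff_continuousAt]; exact fun t => (hJd t).continuousAt
  have hJ'cont : Continuous J' := by
    rw [continuous_iff_continuousAt]; exact fun t => (hJd2 t).continuousAt
  -- determinant nonvanishing
  have hdet : ∀ s ∈ Set.Ioc 0 T, IsUnit (J s).det := fun s hs =>
    (Matrix.isUnit_iff_isUnit_det _).mp (hinv s hs)
  -- continuity of the inverse on Ioc 0 T
  have hKIoc : ContinuousOn K (Set.Ioc 0 T) := by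
    have h1 : ContinuousOn (fun s => ((J s).det)⁻¹ • (J s).adjugate) (Set.Ioc 0 T) :=
      ((hJcont.matrix_det.continuousOn).inv₀ fun s hs => (hdet s hs).ne_zero).smul
        hJcont.matrix_adjugate.continuousOn
    refine ContinuousOn.congr h1 fun s _ => ?_
    rw [hK_def]
    simp only [Matrix.inv_def, Ring.inverse_eq_inv]
  have hKT : ContinuousOn (fun s => (K s)ᵀ) (Set.Ioc 0 T) :=
    (continuous_id.matrix_transpose.comp_continuousOn hKIoc)
  have hgIoc : ContinuousOn g (Set.Ioc 0 T) := hKIoc.mul hKT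
  have hgIoo : ContinuousOn g (Set.Ioo 0 T) := hgIoc.mono Set.Ioo_subset_Ioc_self
  -- derivative of F
  have hF' : ∀ t ∈ Set.Ioo 0 T, HasDerivAt F (-(g t)) t := by
    intro t ht
    have hsub : Set.uIcc t T ⊆ Set.Ioc 0 T := by
      rw [Set.uIcc_of_le ht.2.le]
      exact fun s hs => ⟨lt_of_lt_of_le ht.1 hs.1, hs.2⟩
    have hint := ContinuousOn.intervalIntegrable (μ := MeasureTheory.volume) (u := g) (a := t) (b := T) (by exact hgIoc.mono hsub)
    have hmeas := by
      letI : TopologicalSpace (Matrix (Fin n) (Fin n) ℝ) := PseudoMetricSpace.toUniformSpace.toTopologicalSpace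
      exact ContinuousOn.stronglyMeasurableAtFilter (μ := MeasureTheory.volume) (f := g) isOpen_Ioo (by exact hgIoo) t ht
    exact intervalIntegral.integral_hasDerivAt_left hint hmeas
      (by exact hgIoo.continuousAt (Ioo_mem_nhds ht.1 ht.2))
  -- derivative of K
  have hKd : ∀ t ∈ Set.Ioo 0 T, HasDerivAt K (-(K t * J' t * K t)) t := by
    intro t ht
    refine hasDerivAt_matinv (hJd t) ?_ ?_
    · filter_upwards [Ioo_mem_nhds ht.1 ht.2] with u hu
      exact hinv u (Set.Ioo_subset_Ioc_self hu)
    · exact (hKIoc.mono Set.Ioo_subset_Ioc_self).continuousAt (Ioo_mem_nhds ht.1 ht.2)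
  -- Wronskian identity
  have hW : ∀ t : ℝ, (J t)ᵀ * J' t = (J' t)ᵀ * J t := by
    set W : ℝ → Matrix (Fin n) (Fin n) ℝ :=
      fun u => (J u)ᵀ * J' u - (J' u)ᵀ * J u with hW_def
    have hWd : ∀ u : ℝ, HasDerivAt W 0 u := by
      intro u
      have h1 := (matmul (mtrans (hJd u)) (hJd2 u)).sub
        (matmul (mtrans (hJd2 u)) (hJd u))
      have hJ'' : J'' u = -(R u * J u) := by
        have := hJac u; linear_combination (norm := module) this
      refine HasDerivAt.congr_deriv (f := W) (by exact h1) ?_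
      rw [hJ'']
      have hR : (R u)ᵀ = R u := (hRsymm u).eq
      simp only [Matrix.transpose_neg, Matrix.transpose_mul, hR]
      noncomm_ring
    have hconst : ∀ x y : ℝ, W x = W y :=
      is_const_of_deriv_eq_zero (fun u => (hWd u).differentiableAt)
        (fun u => (hWd u).deriv)
    have h0 : W 0 = 0 := by simp [hW_def, hJ0]
    intro t
    have := (hconst t 0).trans h0
    rw [hW_def] at this
    linear_combination (norm := module) this
  -- one-sided inverses on Ioc
  have hJK : ∀ t ∈ Set.Ioc 0 T, J t * K t = 1 := fun t ht =>
    Matrix.mul_nonsing_inv _ (hdet t ht)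
  have hKJ : ∀ t ∈ Set.Ioc 0 T, K t * J t = 1 := fun t ht =>
    Matrix.nonsing_inv_mul _ (hdet t ht)
  -- symmetrized identity : J' K = Kᵀ J'ᵀ
  have hsym : ∀ t ∈ Set.Ioc 0 T, J' t * K t = (K t)ᵀ * (J' t)ᵀ := by
    intro t ht
    have e1 : (K t)ᵀ * (J t)ᵀ = 1 := by
      rw [← Matrix.transpose_mul, hJK t ht, Matrix.transpose_one]
    calc J' t * K t
        = ((K t)ᵀ * (J t)ᵀ) * (J' t * K t) := by rw [e1, one_mul]
      _ = (K t)ᵀ * ((J t)ᵀ * J' t) * K t := by simp only [mul_assoc]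
      _ = (K t)ᵀ * ((J' t)ᵀ * J t) * K t := by rw [hW t]
      _ = (K t)ᵀ * (J' t)ᵀ * (J t * K t) := by simp only [mul_assoc]
      _ = (K t)ᵀ * (J' t)ᵀ := by rw [hJK t ht, mul_one]
  refine ⟨fun u => J' u * F u - J u * g u,
    fun u => J'' u * F u - J' u * g u + (K u * J' u * K u)ᵀ, ?_, ?_, ?_, ?_, ?_⟩
  · intro t ht
    have h := matmul (hJd t) (hF' t ht)
    simpa [mul_neg, sub_eq_add_neg] using h
  · intro t ht
    have h1 := matmul (hJd2 t) (hF' t ht)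
    have h2 := mtrans (hKd t ht)
    have h := h1.sub h2
    have heq : (fun u => J' u * F u - J u * g u) =ᶠ[nhds t]
        (fun u => J' u * F u - (K u)ᵀ) := by
      filter_upwards [Ioo_mem_nhds ht.1 ht.2] with u hu
      have : J u * g u = (K u)ᵀ := by
        rw [hg_def]
        show J u * ((J u)⁻¹ * ((J u)⁻¹)ᵀ) = _
        rw [← mul_assoc, hJK u (Set.Ioo_subset_Ioc_self hu), one_mul]
      rw [this]
    refine HasDerivAt.congr_of_eventuallyEq ?_ heq
    refine HasDerivAt.congr_deriv (by exact h) ?_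
    simp only [mul_neg, Matrix.transpose_neg, Matrix.transpose_mul, sub_neg_eq_add, sub_eq_add_neg, mul_assoc, neg_neg]
  · -- continuity of E''
    have hFcont : ContinuousOn F (Set.Ioo 0 T) := fun t ht =>
      ((hF' t ht).continuousAt).continuousWithinAt
    have hKIoo : ContinuousOn K (Set.Ioo 0 T) := hKIoc.mono Set.Ioo_subset_Ioc_self
    exact ((hJ''cont.continuousOn.mul hFcont).sub
      (hJ'cont.continuousOn.mul hgIoo)).add
      (continuous_id.matrix_transpose.comp_continuousOn
        ((hKIoo.mul hJ'cont.continuousOn).mul hKIoo))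
  · intro t ht
    have ht' : t ∈ Set.Ioc 0 T := ⟨ht.1, ht.2.le⟩
    have hJe : J'' t = -(R t * J t) := by
      have := hJac t; linear_combination (norm := module) this
    have hKey : (K t * J' t * K t)ᵀ = J' t * g t := by
      rw [Matrix.transpose_mul, Matrix.transpose_mul, hg_def]
      show (K t)ᵀ * ((J' t)ᵀ * (K t)ᵀ) = J' t * ((J t)⁻¹ * ((J t)⁻¹)ᵀ)
      rw [← mul_assoc, ← hsym t ht', mul_assoc]
    show J'' t * F t - J' t * g t + (K t * J' t * K t)ᵀ + R t * (J t * F t) = 0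
    rw [hKey, hJe]
    rw [sub_add_cancel, neg_mul, mul_assoc, neg_add_cancel]
  · rw [intervalIntegral.integral_same, mul_zero]
end

section
/- Let n ≥ 1 and 0 < T₁ < T₂. Let R : ℝ → Matrix (Fin n) (Fin n) ℝ be continuous with R(t) symmetric for every t. Let J : ℝ → Matrix (Fin n) (Fin n) ℝ be twice continuously differentiable with J''(t) + R(t)·J(t) = 0 for all t, J(0) = 0 and J'(0) = 1 (the identity matrix), and assume J(t) is invertible for all t ∈ (0, T₂]. For T ∈ {T₁, T₂} define E_T(t) = J(t) · ∫_t^T J(s)⁻¹·(J(s)⁻¹)ᵀ ds on (0, T]. Then for all t ∈ (0, T₁), E_{T₂}'(t) − E_{T₁}'(t) = J'(t) · ∫_{T₁}^{T₂} J(s)⁻¹·(J(s)⁻¹)ᵀ ds, and consequently lim_{t → 0⁺} (E_{T₂}'(t) − E_{T₁}'(t)) = ∫_{T₁}^{T₂} J(s)⁻¹·(J(s)⁻¹)ᵀ ds. -/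
open Matrix Set Filter Topology

attribute [local instance] Matrix.normedAddCommGroup Matrix.normedSpace

/-- Matrix multiplication as a continuous bilinear map, for the elementwise sup norm. -/
noncomputable def matMulCLM (n : ℕ) :
    Matrix (Fin n) (Fin n) ℝ →L[ℝ] Matrix (Fin n) (Fin n) ℝ →L[ℝ] Matrix (Fin n) (Fin n) ℝ :=
  LinearMap.toContinuousLinearMap
  { toFun := fun A => LinearMap.toContinuousLinearMap (LinearMap.mulLeft ℝ A)
    map_add' := by
      intro A B
      ext C
      simp [add_mul]
    map_smul' := by
      intro r A
      ext C
      simp [smul_mul_assoc] }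

noncomputable instance matENormedAddMonoid (n : ℕ) : ENormedAddMonoid (Matrix (Fin n) (Fin n) ℝ) :=
  NormedAddGroup.toENormedAddMonoid

instance matPseudoMetrizable (n : ℕ) :
    TopologicalSpace.PseudoMetrizableSpace (Matrix (Fin n) (Fin n) ℝ) :=
  inferInstanceAs (TopologicalSpace.PseudoMetrizableSpace (Fin n → Fin n → ℝ))

noncomputable instance matCLMNormedAddCommGroup (n : ℕ) :
    NormedAddCommGroup (Matrix (Fin n) (Fin n) ℝ →L[ℝ] Matrix (Fin n) (Fin n) ℝ) :=
  ContinuousLinearMap.toNormedAddCommGroup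

noncomputable instance matCLMNormedSpace (n : ℕ) :
    NormedSpace ℝ (Matrix (Fin n) (Fin n) ℝ →L[ℝ] Matrix (Fin n) (Fin n) ℝ) :=
  ContinuousLinearMap.toNormedSpace

lemma matMulCLM_apply (n : ℕ) (A B : Matrix (Fin n) (Fin n) ℝ) :
    matMulCLM n A B = A * B := rfl

/-- For the tensors `E_T(t) = J(t)·∫_t^T J(s)⁻¹·(J(s)⁻¹)ᵀ ds` built from the matrix
Jacobi tensor `J`, one has `E_{T₂}'(t) − E_{T₁}'(t) = J'(t)·∫_{T₁}^{T₂} J(s)⁻¹·(J(s)⁻¹)ᵀ ds`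
on `(0, T₁)`, and hence `E_{T₂}'(t) − E_{T₁}'(t) → ∫_{T₁}^{T₂} J(s)⁻¹·(J(s)⁻¹)ᵀ ds`
as `t → 0⁺`. -/
theorem jacobi_tensor_deriv_difference (n : ℕ) (hn : 1 ≤ n) (T₁ T₂ : ℝ)
    (hT₁ : 0 < T₁) (hT₁₂ : T₁ < T₂)
    (R J J' J'' : ℝ → Matrix (Fin n) (Fin n) ℝ)
    (hRcont : Continuous R) (hRsymm : ∀ t : ℝ, (R t).IsSymm)
    (hJd : ∀ t : ℝ, HasDerivAt J (J' t) t)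
    (hJd2 : ∀ t : ℝ, HasDerivAt J' (J'' t) t)
    (hJ''cont : Continuous J'')
    (hJac : ∀ t : ℝ, J'' t + R t * J t = 0)
    (hJ0 : J 0 = 0) (hJ'0 : J' 0 = 1)
    (hinv : ∀ t ∈ Set.Ioc 0 T₂, IsUnit (J t)) :
    ∃ D₁ D₂ : ℝ → Matrix (Fin n) (Fin n) ℝ,
      (∀ t ∈ Set.Ioo 0 T₁,
        HasDerivAt (fun u => J u * ∫ s in u..T₁, (J s)⁻¹ * ((J s)⁻¹)ᵀ) (D₁ t) t) ∧
      (∀ t ∈ Set.Ioo 0 T₁,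
        HasDerivAt (fun u => J u * ∫ s in u..T₂, (J s)⁻¹ * ((J s)⁻¹)ᵀ) (D₂ t) t) ∧
      (∀ t ∈ Set.Ioo 0 T₁,
        D₂ t - D₁ t = J' t * ∫ s in T₁..T₂, (J s)⁻¹ * ((J s)⁻¹)ᵀ) ∧
      Tendsto (fun t => D₂ t - D₁ t) (𝓝[>] (0 : ℝ))
        (𝓝 (∫ s in T₁..T₂, (J s)⁻¹ * ((J s)⁻¹)ᵀ)) := by
  set g : ℝ → Matrix (Fin n) (Fin n) ℝ := fun s => (J s)⁻¹ * ((J s)⁻¹)ᵀ with hg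
  have hJcont : Continuous J := continuous_iff_continuousAt.2 fun t => (hJd t).continuousAt
  -- g is continuous on (0, T₂]
  have hgcontAt : ∀ s ∈ Set.Ioc (0:ℝ) T₂, ContinuousAt g s := by
    intro s hs
    have hinvAt : ContinuousAt (fun A : Matrix (Fin n) (Fin n) ℝ => A⁻¹) (J s) := by
      apply continuousAt_matrix_inv
      obtain ⟨u, hu⟩ := (hinv s hs).map (Matrix.detMonoidHom)
      have hu' : (u : ℝ) = (J s).det := hu
      exact hu' ▸ (NormedRing.inverse_continuousAt u)
    have h1 : ContinuousAt (fun u => (J u)⁻¹) s := hinvAt.comp (hJcont.continuousAt)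
    exact h1.mul ((continuous_id.matrix_transpose).continuousAt.comp h1)
  have hgcontOn : ContinuousOn g (Set.Ioc 0 T₂) :=
    fun s hs => (hgcontAt s hs).continuousWithinAt
  -- interval integrability of g on [a, b] for 0 < a, b ≤ T₂
  have hint : ∀ a b : ℝ, 0 < a → a ≤ b → b ≤ T₂ →
      IntervalIntegrable g MeasureTheory.volume a b := by
    intro a b ha hab hb
    apply ContinuousOn.intervalIntegrable
    apply hgcontOn.mono
    rw [Set.uIcc_of_le hab]
    exact fun x hx => ⟨lt_of_lt_of_le ha hx.1, le_trans hx.2 hb⟩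
  -- derivative of the E_T functions
  have hD : ∀ T : ℝ, T₁ ≤ T → T ≤ T₂ → ∀ t ∈ Set.Ioo 0 T₁,
      HasDerivAt (fun u => J u * ∫ s in u..T, g s)
        (J' t * (∫ s in t..T, g s) - J t * g t) t := by
    intro T hT hT' t ht
    have hFt : HasDerivAt (fun u => ∫ s in u..T, g s) (-(g t)) t := by
      apply intervalIntegral.integral_hasDerivAt_left
      · exact hint t T ht.1 (le_trans (le_of_lt ht.2) hT) hT'
      · refine ⟨Set.Ioo 0 T₂, ?_, ?_⟩
        · exact Ioo_mem_nhds ht.1 (lt_trans ht.2 hT₁₂)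
        · exact (hgcontOn.mono Set.Ioo_subset_Ioc_self).aestronglyMeasurable
            measurableSet_Ioo
      · exact hgcontAt t ⟨ht.1, le_of_lt (lt_trans ht.2 hT₁₂)⟩
    have hc : HasDerivAt (fun u => matMulCLM n (J u)) (matMulCLM n (J' t)) t :=
      (matMulCLM n).hasFDerivAt.comp_hasDerivAt t (hJd t)
    have key := hc.clm_apply hFt
    change HasDerivAt (fun u => J u * ∫ s in u..T, g s)
      (J' t * (∫ s in t..T, g s) + J t * -(g t)) t at key
    have : J' t * (∫ s in t..T, g s) + J t * -(g t)
        = J' t * (∫ s in t..T, g s) - J t * g t := by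
      rw [mul_neg]; abel
    rw [this] at key
    exact key
  refine ⟨fun t => J' t * (∫ s in t..T₁, g s) - J t * g t,
          fun t => J' t * (∫ s in t..T₂, g s) - J t * g t,
          fun t ht => hD T₁ le_rfl (le_of_lt hT₁₂) t ht,
          fun t ht => hD T₂ (le_of_lt hT₁₂) le_rfl t ht, ?_, ?_⟩
  · intro t ht
    have h1 : IntervalIntegrable g MeasureTheory.volume t T₂ :=
      hint t T₂ ht.1 (le_of_lt (lt_trans ht.2 hT₁₂)) le_rfl
    have h2 : IntervalIntegrable g MeasureTheory.volume t T₁ :=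
      hint t T₁ ht.1 (le_of_lt ht.2) (le_of_lt hT₁₂)
    have key : (∫ s in t..T₂, g s) - (∫ s in t..T₁, g s) = ∫ s in T₁..T₂, g s :=
      intervalIntegral.integral_interval_sub_left h1 h2
    rw [← key, mul_sub]
    exact sub_sub_sub_cancel_right _ _ _
  · -- the limit as t → 0⁺
    have hJ'cont : Continuous J' := continuous_iff_continuousAt.2 fun t => (hJd2 t).continuousAt
    have heq : ∀ᶠ t in 𝓝[>] (0:ℝ), (fun t => (J' t * (∫ s in t..T₂, g s) - J t * g t)
        - (J' t * (∫ s in t..T₁, g s) - J t * g t)) t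
        = J' t * ∫ s in T₁..T₂, g s := by
      filter_upwards [Ioo_mem_nhdsGT_of_mem (Set.left_mem_Ico.2 hT₁)] with t ht
      have h1 : IntervalIntegrable g MeasureTheory.volume t T₂ :=
        hint t T₂ ht.1 (le_of_lt (lt_trans ht.2 hT₁₂)) le_rfl
      have h2 : IntervalIntegrable g MeasureTheory.volume t T₁ :=
        hint t T₁ ht.1 (le_of_lt ht.2) (le_of_lt hT₁₂)
      have key : (∫ s in t..T₂, g s) - (∫ s in t..T₁, g s) = ∫ s in T₁..T₂, g s :=
        intervalIntegral.integral_interval_sub_left h1 h2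
      rw [← key, mul_sub]
      abel
    rw [Filter.tendsto_congr' heq]
    have : Tendsto (fun t => J' t * ∫ s in T₁..T₂, g s) (𝓝 (0:ℝ))
        (𝓝 (J' 0 * ∫ s in T₁..T₂, g s)) :=
      (hJ'cont.mul continuous_const).continuousAt
    rw [hJ'0, one_mul] at this
    exact this.mono_left nhdsWithin_le_nhds
end

section
/- Let n ≥ 1 and T > 0. Let R : ℝ → Matrix (Fin n) (Fin n) ℝ be continuous with R(t) symmetric for every t. Let J : ℝ → Matrix (Fin n) (Fin n) ℝ be twice continuously differentiable with J''(t) + R(t)·J(t) = 0 for all t, J(0) = 0 and J'(0) = 1 (the identity matrix), and assume J(t) is invertible for all t ∈ (0, T]. Then lim_{t → 0⁺} J(t) · ∫_t^T J(s)⁻¹·(J(s)⁻¹)ᵀ ds = 1, the identity matrix. -/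
open Matrix Set Filter Topology

attribute [local instance] Matrix.normedAddCommGroup Matrix.normedSpace

private lemma matrix_norm_mul_le' {n : ℕ} (A B : Matrix (Fin n) (Fin n) ℝ) :
    ‖A * B‖ ≤ n * ‖A‖ * ‖B‖ := by
  rw [Matrix.norm_le_iff (by positivity)]
  intro i j
  rw [Matrix.mul_apply]
  calc ‖∑ k, A i k * B k j‖ ≤ ∑ k : Fin n, ‖A i k * B k j‖ := norm_sum_le _ _
    _ ≤ ∑ _k : Fin n, ‖A‖ * ‖B‖ := by
        refine Finset.sum_le_sum fun k _ => ?_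
        rw [norm_mul]
        exact mul_le_mul (Matrix.norm_entry_le_entrywise_sup_norm A)
          (Matrix.norm_entry_le_entrywise_sup_norm B) (norm_nonneg _) (norm_nonneg _)
    _ = n * ‖A‖ * ‖B‖ := by simp [Finset.sum_const, mul_assoc]

private lemma matrix_norm_one_le' {n : ℕ} : ‖(1 : Matrix (Fin n) (Fin n) ℝ)‖ ≤ 1 := by
  rw [Matrix.norm_le_iff zero_le_one]
  intro i j
  rw [Matrix.one_apply]
  split_ifs <;> simp

/-- For the matrix Jacobi tensor `J` (with `J(0) = 0`, `J'(0) = 1` and `J(t)` invertible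
on `(0,T]`), one has `J(t)·∫_t^T J(s)⁻¹·(J(s)⁻¹)ᵀ ds → 1` as `t → 0⁺`. -/
theorem jacobi_tensor_limit_id (n : ℕ) (hn : 1 ≤ n) (T : ℝ) (hT : 0 < T)
    (R J J' J'' : ℝ → Matrix (Fin n) (Fin n) ℝ)
    (hRcont : Continuous R) (hRsymm : ∀ t : ℝ, (R t).IsSymm)
    (hJd : ∀ t : ℝ, HasDerivAt J (J' t) t)
    (hJd2 : ∀ t : ℝ, HasDerivAt J' (J'' t) t)
    (hJ''cont : Continuous J'')
    (hJac : ∀ t : ℝ, J'' t + R t * J t = 0)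
    (hJ0 : J 0 = 0) (hJ'0 : J' 0 = 1)
    (hinv : ∀ t ∈ Set.Ioc 0 T, IsUnit (J t)) :
    Tendsto (fun t => J t * ∫ s in t..T, (J s)⁻¹ * ((J s)⁻¹)ᵀ)
      (𝓝[>] (0 : ℝ)) (𝓝 (1 : Matrix (Fin n) (Fin n) ℝ)) := by
  have hJcont : Continuous J := continuous_iff_continuousAt.2 fun t => (hJd t).continuousAt
  -- a bound for J'' on [0,T]
  obtain ⟨M0, hM0⟩ := (isCompact_Icc (a := (0:ℝ)) (b := T)).exists_bound_of_continuousOn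
    hJ''cont.continuousOn
  set M := max M0 0 with hMdef
  have hMnn : 0 ≤ M := le_max_right _ _
  have hMb : ∀ s ∈ Icc (0:ℝ) T, ‖J'' s‖ ≤ M := fun s hs => (hM0 s hs).trans (le_max_left _ _)
  -- first order Taylor for J'
  have hT1 : ∀ u ∈ Icc (0:ℝ) T, ‖J' u - 1‖ ≤ M * u := by
    intro u hu
    have h := (convex_Icc (0:ℝ) T).norm_image_sub_le_of_norm_hasDerivWithin_le
      (f := fun v => J' v) (f' := J'') (C := M)
      (fun v hv => (hJd2 v).hasDerivWithinAt) hMb (left_mem_Icc.2 hT.le) hu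
    simp only [hJ'0] at h
    simpa [abs_of_nonneg hu.1] using h
  -- second order Taylor for J
  have hT2 : ∀ s ∈ Icc (0:ℝ) T, ‖J s - s • (1 : Matrix (Fin n) (Fin n) ℝ)‖ ≤ M * s ^ 2 := by
    intro s hs
    have hder : ∀ v : ℝ, HasDerivAt (fun u => J u - u • (1 : Matrix (Fin n) (Fin n) ℝ))
        (J' v - 1) v := by
      intro v
      have h2 : HasDerivAt (fun u : ℝ => u • (1 : Matrix (Fin n) (Fin n) ℝ)) 1 v := by
        have h3 := (hasDerivAt_id v).smul_const (1 : Matrix (Fin n) (Fin n) ℝ); simp at h3; exact h3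
      exact (hJd v).sub h2
    have h := (convex_Icc (0:ℝ) s).norm_image_sub_le_of_norm_hasDerivWithin_le
      (f := fun u => J u - u • (1 : Matrix (Fin n) (Fin n) ℝ)) (f' := fun u => J' u - 1)
      (C := M * s)
      (fun v hv => (hder v).hasDerivWithinAt)
      (fun v hv => (hT1 v ⟨hv.1, hv.2.trans hs.2⟩).trans
        (mul_le_mul_of_nonneg_left hv.2 hMnn))
      (left_mem_Icc.2 hs.1) (right_mem_Icc.2 hs.1)
    simp only [hJ0, zero_smul, sub_zero, sub_self] at h
    calc ‖J s - s • (1 : Matrix (Fin n) (Fin n) ℝ)‖ ≤ M * s * ‖s‖ := h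
      _ = M * s ^ 2 := by rw [Real.norm_eq_abs, abs_of_nonneg hs.1]; ring
  -- the small parameter δ
  set δ : ℝ := min T (1 / (2 * n * M + 2)) with hδdef
  have hδpos : 0 < δ := lt_min hT (by positivity)
  have hδT : δ ≤ T := min_le_left _ _
  have hsmall : ∀ s ∈ Ioc (0:ℝ) δ, (n : ℝ) * M * s ≤ 1 / 2 := by
    intro s hs
    have h1 : s ≤ 1 / (2 * n * M + 2) := hs.2.trans (min_le_right _ _)
    have h2 : (0:ℝ) ≤ (n : ℝ) * M := by positivity
    have h3 : (0:ℝ) < 2 * n * M + 2 := by positivity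
    rw [le_div_iff₀ h3] at h1
    nlinarith [hs.1.le]
  -- bound for the inverse
  have hD : ∀ s ∈ Ioc (0:ℝ) δ, ‖(J s)⁻¹ - s⁻¹ • (1 : Matrix (Fin n) (Fin n) ℝ)‖ ≤ 2 * n * M := by
    intro s hs
    have hs0 : 0 < s := hs.1
    have hsT : s ∈ Ioc (0:ℝ) T := ⟨hs0, hs.2.trans hδT⟩
    have hdet : IsUnit (J s).det := (Matrix.isUnit_iff_isUnit_det _).1 (hinv s hsT)
    have hidL : (J s)⁻¹ * J s = 1 := Matrix.nonsing_inv_mul _ hdet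
    have hid : (J s)⁻¹ - s⁻¹ • (1 : Matrix (Fin n) (Fin n) ℝ)
        = s⁻¹ • ((J s)⁻¹ * (s • (1 : Matrix (Fin n) (Fin n) ℝ) - J s)) := by
      rw [Matrix.mul_sub, Matrix.mul_smul, Matrix.mul_one, hidL, smul_sub, smul_smul,
        inv_mul_cancel₀ hs0.ne', one_smul]
    set x := ‖(J s)⁻¹ - s⁻¹ • (1 : Matrix (Fin n) (Fin n) ℝ)‖ with hxdef
    set y := ‖(J s)⁻¹‖ with hydef
    have h1 : x ≤ (n : ℝ) * M * s * y := by
      have hb : ‖(J s)⁻¹ * (s • (1 : Matrix (Fin n) (Fin n) ℝ) - J s)‖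
          ≤ n * y * (M * s ^ 2) := by
        refine (matrix_norm_mul_le' _ _).trans ?_
        have : ‖s • (1 : Matrix (Fin n) (Fin n) ℝ) - J s‖ ≤ M * s ^ 2 := by
          rw [norm_sub_rev]; exact hT2 s ⟨hs0.le, hsT.2⟩
        exact mul_le_mul_of_nonneg_left this (by positivity)
      calc x = ‖s⁻¹‖ * ‖(J s)⁻¹ * (s • (1 : Matrix (Fin n) (Fin n) ℝ) - J s)‖ := by
            rw [hxdef, hid, norm_smul]
        _ ≤ s⁻¹ * (n * y * (M * s ^ 2)) := by
            rw [Real.norm_eq_abs, abs_of_pos (inv_pos.2 hs0)]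
            exact mul_le_mul_of_nonneg_left hb (by positivity)
        _ = (n : ℝ) * M * s * y := by field_simp
    have h2 : y ≤ x + s⁻¹ := by
      calc y = ‖((J s)⁻¹ - s⁻¹ • (1 : Matrix (Fin n) (Fin n) ℝ))
            + s⁻¹ • (1 : Matrix (Fin n) (Fin n) ℝ)‖ := by rw [sub_add_cancel]
        _ ≤ x + ‖s⁻¹ • (1 : Matrix (Fin n) (Fin n) ℝ)‖ := norm_add_le _ _
        _ ≤ x + s⁻¹ := by
            refine add_le_add le_rfl ?_
            rw [norm_smul, Real.norm_eq_abs, abs_of_pos (inv_pos.2 hs0)]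
            calc s⁻¹ * ‖(1 : Matrix (Fin n) (Fin n) ℝ)‖ ≤ s⁻¹ * 1 :=
                mul_le_mul_of_nonneg_left matrix_norm_one_le' (by positivity)
              _ = s⁻¹ := mul_one _
    have h3 : (n : ℝ) * M * s ≤ 1 / 2 := hsmall s hs
    have h4 : (n : ℝ) * M * s * s⁻¹ = n * M := by field_simp
    have h5 : (n : ℝ) * M * s * y ≤ (n : ℝ) * M * s * (x + s⁻¹) :=
      mul_le_mul_of_nonneg_left h2 (by positivity)
    have h6 : (n : ℝ) * M * s * x ≤ (1 / 2) * x := mul_le_mul_of_nonneg_right h3 (norm_nonneg _)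
    nlinarith [norm_nonneg ((J s)⁻¹ - s⁻¹ • (1 : Matrix (Fin n) (Fin n) ℝ))]
  -- the error integrand g and its bounds
  set c1 : ℝ := 2 * n * M with hc1def
  have hc1nn : 0 ≤ c1 := by positivity
  set g : ℝ → Matrix (Fin n) (Fin n) ℝ :=
    fun s => (J s)⁻¹ * ((J s)⁻¹)ᵀ - (s ^ 2)⁻¹ • 1 with hgdef
  have hgsmall : ∀ s ∈ Ioc (0:ℝ) δ, ‖g s‖ ≤ 2 * c1 * s⁻¹ + n * c1 ^ 2 := by
    intro s hs
    have hs0 : 0 < s := hs.1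
    set D : Matrix (Fin n) (Fin n) ℝ := (J s)⁻¹ - s⁻¹ • 1 with hDdef
    have hJs : (J s)⁻¹ = s⁻¹ • (1 : Matrix (Fin n) (Fin n) ℝ) + D := by
      rw [hDdef]; abel
    have expand : (s⁻¹ • (1 : Matrix (Fin n) (Fin n) ℝ) + D) * (s⁻¹ • 1 + Dᵀ)
        = (s ^ 2)⁻¹ • 1 + (s⁻¹ • D + s⁻¹ • Dᵀ + D * Dᵀ) := by
      rw [Matrix.add_mul, Matrix.smul_mul, Matrix.one_mul, Matrix.mul_add, Matrix.mul_smul,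
        Matrix.mul_one, smul_add, smul_smul, sq, mul_inv]
      abel
    have hgid : g s = s⁻¹ • D + s⁻¹ • Dᵀ + D * Dᵀ := by
      simp only [hgdef]
      rw [hJs, transpose_add, transpose_smul, transpose_one, expand]
      abel
    have hDb : ‖D‖ ≤ c1 := hD s hs
    have hDtb : ‖Dᵀ‖ ≤ c1 := by rw [Matrix.norm_transpose]; exact hDb
    calc ‖g s‖ ≤ ‖s⁻¹ • D‖ + ‖s⁻¹ • Dᵀ‖ + ‖D * Dᵀ‖ := by
          rw [hgid]; exact (norm_add_le _ _).trans (add_le_add_left (norm_add_le _ _) _)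
      _ ≤ s⁻¹ * c1 + s⁻¹ * c1 + n * c1 * c1 := by
          have h1 : ‖s⁻¹ • D‖ ≤ s⁻¹ * c1 := by
            rw [norm_smul, Real.norm_eq_abs, abs_of_pos (inv_pos.2 hs0)]
            exact mul_le_mul_of_nonneg_left hDb (by positivity)
          have h2 : ‖s⁻¹ • Dᵀ‖ ≤ s⁻¹ * c1 := by
            rw [norm_smul, Real.norm_eq_abs, abs_of_pos (inv_pos.2 hs0)]
            exact mul_le_mul_of_nonneg_left hDtb (by positivity)
          have h3 : ‖D * Dᵀ‖ ≤ n * c1 * c1 := by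
            refine (matrix_norm_mul_le' _ _).trans ?_
            have hDD : ‖D‖ * ‖Dᵀ‖ ≤ c1 * c1 := mul_le_mul hDb hDtb (norm_nonneg _) hc1nn
            calc (n:ℝ) * ‖D‖ * ‖Dᵀ‖ = n * (‖D‖ * ‖Dᵀ‖) := by ring
              _ ≤ n * (c1 * c1) := mul_le_mul_of_nonneg_left hDD (Nat.cast_nonneg n)
              _ = n * c1 * c1 := by ring
          exact add_le_add (add_le_add h1 h2) h3
      _ = 2 * c1 * s⁻¹ + n * c1 ^ 2 := by ring
  -- continuity on (0,T]
  have hinvcont : ContinuousOn (fun s => (J s)⁻¹) (Ioc (0:ℝ) T) := by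
    have heq : ∀ s ∈ Ioc (0:ℝ) T, ((J s).det)⁻¹ • (J s).adjugate = (J s)⁻¹ := by
      intro s hs
      rw [Matrix.inv_def, Ring.inverse_eq_inv']
    refine ContinuousOn.congr ?_ fun s hs => (heq s hs).symm
    refine ContinuousOn.fun_smul ?_ hJcont.matrix_adjugate.continuousOn
    refine ContinuousOn.inv₀ hJcont.matrix_det.continuousOn fun s hs => ?_
    exact ((Matrix.isUnit_iff_isUnit_det _).1 (hinv s hs)).ne_zero
  have hfcont : ContinuousOn (fun s => (J s)⁻¹ * ((J s)⁻¹)ᵀ) (Ioc (0:ℝ) T) :=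
    hinvcont.mul ((Continuous.matrix_transpose continuous_id).comp_continuousOn hinvcont)
  have hgcont : ContinuousOn g (Ioc (0:ℝ) T) := by
    refine hfcont.sub (ContinuousOn.fun_smul (ContinuousOn.inv₀ ?_ fun s hs => ?_) continuousOn_const)
    · exact (continuousOn_id.pow 2)
    · exact pow_ne_zero _ hs.1.ne'
  -- bound for g on [δ,T] and the global bound
  obtain ⟨K, hK⟩ := (isCompact_Icc (a := δ) (b := T)).exists_bound_of_continuousOn
    (hgcont.mono fun s hs => ⟨hδpos.trans_le hs.1, hs.2⟩)
  set c3 : ℝ := max ((n:ℝ) * c1 ^ 2) K with hc3def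
  have hc3nn : 0 ≤ c3 := le_trans (by positivity) (le_max_left _ _)
  have hgb : ∀ s ∈ Ioc (0:ℝ) T, ‖g s‖ ≤ 2 * c1 * s⁻¹ + c3 := by
    intro s hs
    rcases le_or_gt s δ with h | h
    · exact (hgsmall s ⟨hs.1, h⟩).trans (add_le_add_right (le_max_left _ _) _)
    · have h1 : ‖g s‖ ≤ K := hK s ⟨h.le, hs.2⟩
      have h2 : (0:ℝ) ≤ 2 * c1 * s⁻¹ :=
        mul_nonneg (mul_nonneg two_pos.le hc1nn) (inv_nonneg.2 hs.1.le)
      calc ‖g s‖ ≤ K := h1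
        _ ≤ c3 := le_max_right _ _
        _ ≤ 2 * c1 * s⁻¹ + c3 := by linarith
  -- key decomposition for t ∈ (0, δ)
  have key : ∀ t ∈ Ioo (0:ℝ) δ,
      J t * ∫ s in t..T, (J s)⁻¹ * ((J s)⁻¹)ᵀ
        = (t⁻¹ - T⁻¹) • J t + J t * ∫ s in t..T, g s := by
    intro t ht
    have ht0 : 0 < t := ht.1
    have htT : t ≤ T := (ht.2.trans_le hδT).le
    have huIcc : uIcc t T = Icc t T := uIcc_of_le htT
    have hsub : Icc t T ⊆ Ioc (0:ℝ) T := fun s hs => ⟨ht0.trans_le hs.1, hs.2⟩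
    have hfint : @IntervalIntegrable _ PseudoMetricSpace.toUniformSpace.toTopologicalSpace _ (fun s => (J s)⁻¹ * ((J s)⁻¹)ᵀ)
        MeasureTheory.volume t T := by
      apply ContinuousOn.intervalIntegrable
      rw [huIcc]; exact hfcont.mono hsub
    have hsint : @IntervalIntegrable _ PseudoMetricSpace.toUniformSpace.toTopologicalSpace _ (fun s : ℝ => (s ^ 2)⁻¹ • (1 : Matrix (Fin n) (Fin n) ℝ))
        MeasureTheory.volume t T := by
      apply ContinuousOn.intervalIntegrable
      rw [huIcc]
      refine ContinuousOn.fun_smul (ContinuousOn.inv₀ (continuousOn_id.pow 2) fun s hs => ?_)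
        continuousOn_const
      exact pow_ne_zero _ (ht0.trans_le hs.1).ne'
    have hgint : @IntervalIntegrable _ PseudoMetricSpace.toUniformSpace.toTopologicalSpace _ g MeasureTheory.volume t T := hfint.sub hsint
    have h0 : (0:ℝ) ∉ uIcc t T := by
      rw [huIcc]; rintro ⟨h1, -⟩; exact absurd h1 (not_le.2 ht0)
    have h2 : (∫ s in t..T, (s ^ 2)⁻¹) = t⁻¹ - T⁻¹ := by
      have hz := integral_zpow (a := t) (b := T) (n := -2) (Or.inr ⟨by norm_num, h0⟩)
      have he : ∀ x : ℝ, x ^ (-2 : ℤ) = (x ^ 2)⁻¹ := fun x => by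
        rw [_root_.zpow_neg]; norm_cast
      rw [intervalIntegral.integral_congr (g := fun x : ℝ => (x ^ 2)⁻¹) fun x _ => (he x)] at hz
      rw [hz]
      norm_num
      ring
    rw [intervalIntegral.integral_congr (g := fun s : ℝ =>
        (s ^ 2)⁻¹ • (1 : Matrix (Fin n) (Fin n) ℝ) + g s) (fun s _ => by simp only [hgdef]; module),
      intervalIntegral.integral_add hsint hgint, intervalIntegral.integral_smul_const, h2,
      Matrix.mul_add, Matrix.mul_smul, Matrix.mul_one]
  -- the main term tends to 1
  have hmain : Tendsto (fun t : ℝ => (t⁻¹ - T⁻¹) • J t) (𝓝[>] (0:ℝ))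
      (𝓝 (1 : Matrix (Fin n) (Fin n) ℝ)) := by
    have h1 : Tendsto (fun t : ℝ => t⁻¹ • J t) (𝓝[>] (0:ℝ))
        (𝓝 (1 : Matrix (Fin n) (Fin n) ℝ)) := by
      have hs := (hJd 0)
      replace hs := hasDerivAt_iff_tendsto_slope.1 hs
      have hs2 : Tendsto (slope J 0) (𝓝[>] (0:ℝ)) (𝓝 (J' 0)) :=
        hs.mono_left (nhdsWithin_mono 0 fun x hx => ne_of_gt hx)
      rw [hJ'0] at hs2
      refine hs2.congr fun t => ?_
      simp [slope_def_module, hJ0]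
    have h2 : Tendsto (fun t : ℝ => T⁻¹ • J t) (𝓝[>] (0:ℝ))
        (𝓝 (0 : Matrix (Fin n) (Fin n) ℝ)) := by
      have := ((hJcont.tendsto 0).const_smul T⁻¹).mono_left
        (nhdsWithin_le_nhds (s := Ioi (0:ℝ)))
      simpa [hJ0] using this
    have := h1.sub h2
    rw [sub_zero] at this
    refine this.congr fun t => ?_
    rw [sub_smul]
  -- the error term tends to 0
  have herr : Tendsto (fun t : ℝ => J t * ∫ s in t..T, g s) (𝓝[>] (0:ℝ))
      (𝓝 (0 : Matrix (Fin n) (Fin n) ℝ)) := by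
    set c2 : ℝ := 2 * c1 with hc2def
    have hc2nn : 0 ≤ c2 := by positivity
    set b : ℝ → ℝ := fun t =>
      n * ((M * T + 1) * t) * (c2 * (Real.log T - Real.log t) + c3 * (T - t)) with hbdef
    refine squeeze_zero_norm' (a := b) ?_ ?_
    · filter_upwards [Ioo_mem_nhdsGT_of_mem (Set.mem_Ico.2 ⟨le_refl (0:ℝ), hδpos⟩)] with t ht
      have ht0 : 0 < t := ht.1
      have htT : t ≤ T := (ht.2.trans_le hδT).le
      have huIcc : uIcc t T = Icc t T := uIcc_of_le htT
      have hsub : Icc t T ⊆ Ioc (0:ℝ) T := fun s hs => ⟨ht0.trans_le hs.1, hs.2⟩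
      have hfint : @IntervalIntegrable _ PseudoMetricSpace.toUniformSpace.toTopologicalSpace _ (fun s => (J s)⁻¹ * ((J s)⁻¹)ᵀ)
          MeasureTheory.volume t T := by
        apply ContinuousOn.intervalIntegrable
        rw [huIcc]; exact hfcont.mono hsub
      have hsint : @IntervalIntegrable _ PseudoMetricSpace.toUniformSpace.toTopologicalSpace _ (fun s : ℝ => (s ^ 2)⁻¹ • (1 : Matrix (Fin n) (Fin n) ℝ))
          MeasureTheory.volume t T := by
        apply ContinuousOn.intervalIntegrable
        rw [huIcc]
        refine ContinuousOn.fun_smul (ContinuousOn.inv₀ (continuousOn_id.pow 2) fun s hs => ?_)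
          continuousOn_const
        exact pow_ne_zero _ (ht0.trans_le hs.1).ne'
      have hgint : @IntervalIntegrable _ PseudoMetricSpace.toUniformSpace.toTopologicalSpace _ g MeasureTheory.volume t T := hfint.sub hsint
      have hbint : IntervalIntegrable (fun s : ℝ => c2 * s⁻¹ + c3)
          MeasureTheory.volume t T := by
        apply ContinuousOn.intervalIntegrable
        rw [huIcc]
        refine ContinuousOn.add (ContinuousOn.mul continuousOn_const
          (ContinuousOn.inv₀ continuousOn_id fun s hs => (ht0.trans_le hs.1).ne')) continuousOn_const
      have h0 : (0:ℝ) ∉ uIcc t T := by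
        rw [huIcc]; rintro ⟨h1, -⟩; exact absurd h1 (not_le.2 ht0)
      -- bound ‖J t‖
      have hJtb : ‖J t‖ ≤ (M * T + 1) * t := by
        calc ‖J t‖ = ‖(J t - t • (1 : Matrix (Fin n) (Fin n) ℝ)) + t • 1‖ := by
              rw [sub_add_cancel]
          _ ≤ ‖J t - t • (1 : Matrix (Fin n) (Fin n) ℝ)‖ + ‖t • (1 : Matrix (Fin n) (Fin n) ℝ)‖ :=
              norm_add_le _ _
          _ ≤ M * t ^ 2 + t := by
              refine add_le_add (hT2 t ⟨ht0.le, htT⟩) ?_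
              rw [norm_smul, Real.norm_eq_abs, abs_of_pos ht0]
              calc t * ‖(1 : Matrix (Fin n) (Fin n) ℝ)‖ ≤ t * 1 :=
                  mul_le_mul_of_nonneg_left matrix_norm_one_le' ht0.le
                _ = t := mul_one _
          _ ≤ (M * T + 1) * t := by
              nlinarith [mul_le_mul_of_nonneg_right (mul_le_mul_of_nonneg_left htT hMnn) ht0.le]
      -- bound for the integral of g
      have hIb : ‖∫ s in t..T, g s‖ ≤ c2 * (Real.log T - Real.log t) + c3 * (T - t) := by
        calc ‖∫ s in t..T, g s‖ ≤ ∫ s in t..T, ‖g s‖ :=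
              intervalIntegral.norm_integral_le_integral_norm htT
          _ ≤ ∫ s in t..T, (c2 * s⁻¹ + c3) := by
              refine intervalIntegral.integral_mono_on htT hgint.norm hbint fun s hs => ?_
              have := hgb s (hsub hs)
              calc ‖g s‖ ≤ 2 * c1 * s⁻¹ + c3 := this
                _ = c2 * s⁻¹ + c3 := by rw [hc2def]
          _ = c2 * (Real.log T - Real.log t) + c3 * (T - t) := by
              rw [intervalIntegral.integral_add
                  ((intervalIntegrable_const (c := c2)).mul_continuousOn ?_)
                  intervalIntegrable_const]
              · rw [intervalIntegral.integral_const_mul, integral_inv h0,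
                  intervalIntegral.integral_const, Real.log_div hT.ne' ht0.ne', smul_eq_mul]
                ring
              · rw [huIcc]
                exact ContinuousOn.inv₀ continuousOn_id fun s hs => (ht0.trans_le hs.1).ne'
      -- combine
      have hInn : (0:ℝ) ≤ c2 * (Real.log T - Real.log t) + c3 * (T - t) :=
        le_trans (norm_nonneg _) hIb
      calc ‖J t * ∫ s in t..T, g s‖ ≤ n * ‖J t‖ * ‖∫ s in t..T, g s‖ :=
            matrix_norm_mul_le' _ _
        _ ≤ b t := by
            rw [hbdef]
            refine mul_le_mul ?_ hIb (norm_nonneg _) (by positivity)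
            exact mul_le_mul_of_nonneg_left hJtb (Nat.cast_nonneg n)
    · -- b tends to 0
      have hid : Tendsto (fun t : ℝ => t) (𝓝[>] (0:ℝ)) (𝓝 0) :=
        tendsto_id.mono_right nhdsWithin_le_nhds
      have hlog : Tendsto (fun t : ℝ => Real.log t * t) (𝓝[>] (0:ℝ)) (𝓝 0) := by
        have := tendsto_log_mul_rpow_nhdsGT_zero one_pos
        simpa [Real.rpow_one] using this
      have h1 : Tendsto (fun t : ℝ => t * Real.log T) (𝓝[>] (0:ℝ)) (𝓝 0) := by
        simpa using hid.mul_const (Real.log T)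
      have h3 : Tendsto (fun t : ℝ => t * T) (𝓝[>] (0:ℝ)) (𝓝 0) := by
        simpa using hid.mul_const T
      have h4 : Tendsto (fun t : ℝ => t * t) (𝓝[>] (0:ℝ)) (𝓝 0) := by
        simpa using hid.mul hid
      have hb : Tendsto (fun t : ℝ => (n * (M * T + 1)) *
          (c2 * (t * Real.log T - Real.log t * t) + c3 * (t * T - t * t)))
          (𝓝[>] (0:ℝ)) (𝓝 0) := by
        have := (((h1.sub hlog).const_mul c2).add ((h3.sub h4).const_mul c3)).const_mul
          ((n : ℝ) * (M * T + 1))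
        simpa using this
      refine hb.congr fun t => ?_
      ring
  -- assemble
  have hsum := hmain.add herr
  rw [add_zero] at hsum
  refine hsum.congr' ?_
  filter_upwards [Ioo_mem_nhdsGT_of_mem (Set.mem_Ico.2 ⟨le_refl (0:ℝ), hδpos⟩)] with t ht
  exact (key t ht).symm
end

section
/- Let n ≥ 1, let K be a compact topological space, and let A_k : K → Matrix (Fin n) (Fin n) ℝ (k ∈ ℕ) be a sequence of continuous maps such that for every x ∈ K and every k: A_k(x) is symmetric and A_{k+1}(x) − A_k(x) is positive semidefinite. Suppose A_k converges pointwise on K to a map A : K → Matrix (Fin n) (Fin n) ℝ with A(x) symmetric for all x, and suppose the function x ↦ trace (A x) is continuous on K. Then A_k converges to A uniformly on K, and in particular A is continuous. -/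
open Matrix Filter Topology

attribute [local instance] Matrix.normedAddCommGroup Matrix.normedSpace

section Aux
variable {n : ℕ}

lemma dl_entry_lip (i j : Fin n) :
    LipschitzWith 1 (fun M : Matrix (Fin n) (Fin n) ℝ => M i j) := by
  refine LipschitzWith.of_dist_le_mul fun M N => ?_
  rw [NNReal.coe_one, one_mul, Real.dist_eq, dist_eq_norm]
  simpa [Matrix.sub_apply] using (M - N).norm_entry_le_entrywise_sup_norm (i := i) (j := j)

lemma dl_psd_diag_nonneg {M : Matrix (Fin n) (Fin n) ℝ} (hM : M.PosSemidef) (i : Fin n) :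
    0 ≤ M i i := by
  simpa using hM.dotProduct_mulVec_nonneg (Pi.single i 1)

lemma dl_psd_trace_nonneg {M : Matrix (Fin n) (Fin n) ℝ} (hM : M.PosSemidef) :
    0 ≤ M.trace := by
  exact Finset.sum_nonneg fun i _ => dl_psd_diag_nonneg hM i

lemma dl_diag_le_trace {M : Matrix (Fin n) (Fin n) ℝ} (hM : M.PosSemidef) (i : Fin n) :
    M i i ≤ M.trace :=
  Finset.single_le_sum (fun j _ => dl_psd_diag_nonneg hM j) (Finset.mem_univ i)

lemma dl_psd_entry_le_trace {M : Matrix (Fin n) (Fin n) ℝ} (hM : M.PosSemidef) (i j : Fin n) :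
    |M i j| ≤ M.trace := by
  have hs : M j i = M i j := by
    have := hM.1.apply i j
    simpa using this
  have h1 := hM.dotProduct_mulVec_nonneg ((Pi.single i 1 + Pi.single j 1 : Fin n → ℝ))
  have h2 := hM.dotProduct_mulVec_nonneg ((Pi.single i 1 - Pi.single j 1 : Fin n → ℝ))
  have hstar1 : star ((Pi.single i 1 + Pi.single j 1 : Fin n → ℝ)) = (Pi.single i 1 + Pi.single j 1 : Fin n → ℝ) := by
    ext k; simp
  have hstar2 : star ((Pi.single i 1 - Pi.single j 1 : Fin n → ℝ)) = (Pi.single i 1 - Pi.single j 1 : Fin n → ℝ) := by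
    ext k; simp
  rw [hstar1] at h1
  rw [hstar2] at h2
  simp only [Matrix.mulVec_add, Matrix.mulVec_sub, dotProduct_add, dotProduct_sub,
    add_dotProduct, sub_dotProduct, Matrix.mulVec_single, mul_one] at h1 h2
  have e1 : ∀ a b : Fin n, dotProduct (Pi.single a (1:ℝ)) (MulOpposite.op (1:ℝ) • M.col b) = M a b := by
    intro a b; simp [single_dotProduct]
  rw [e1, e1, e1, e1] at h1 h2
  have hii := dl_diag_le_trace hM i
  have hjj := dl_diag_le_trace hM j
  rcases abs_cases (M i j) with ⟨he, _⟩ | ⟨he, _⟩ <;> rw [he] <;> linarith [hs]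

lemma dl_psd_norm_le_trace {M : Matrix (Fin n) (Fin n) ℝ} (hM : M.PosSemidef) :
    ‖M‖ ≤ M.trace := by
  rw [Matrix.norm_le_iff (dl_psd_trace_nonneg hM)]
  intro i j
  simpa [Real.norm_eq_abs] using dl_psd_entry_le_trace hM i j

end Aux

/-- Dini-type theorem: a monotone (in the Loewner order) sequence of continuous
symmetric-matrix-valued maps on a compact space converging pointwise to a symmetric
limit with continuous trace converges uniformly; in particular the limit is continuous. -/
theorem dini_loewner (n : ℕ) (hn : 1 ≤ n) (K : Type*) [TopologicalSpace K] [CompactSpace K]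
    (A : ℕ → K → Matrix (Fin n) (Fin n) ℝ) (Alim : K → Matrix (Fin n) (Fin n) ℝ)
    (hAcont : ∀ k : ℕ, Continuous (A k))
    (hAsymm : ∀ (k : ℕ) (x : K), (A k x).IsSymm)
    (hmono : ∀ (k : ℕ) (x : K), (A (k + 1) x - A k x).PosSemidef)
    (hptwise : ∀ x : K, Tendsto (fun k => A k x) atTop (𝓝 (Alim x)))
    (hlimsymm : ∀ x : K, (Alim x).IsSymm)
    (htrcont : Continuous (fun x => (Alim x).trace)) :
    TendstoUniformly A Alim atTop ∧ Continuous Alim := by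
  classical
  have hentry : ∀ (x : K) (i j : Fin n),
      Tendsto (fun k => A k x i j) atTop (𝓝 (Alim x i j)) :=
    fun x i j => (((dl_entry_lip i j).continuous.tendsto _).comp (hptwise x))
  have hdiff : ∀ (k l : ℕ), k ≤ l → ∀ x, (A l x - A k x).PosSemidef := by
    intro k l hkl x
    induction l, hkl using Nat.le_induction with
    | base => simpa [sub_self] using (Matrix.PosSemidef.zero (n := Fin n) (R := ℝ))
    | succ l hkl ih =>
      have := (hmono l x).add ih
      simpa [sub_add_sub_cancel] using this
  have hherm : ∀ (k : ℕ) (x : K), (Alim x - A k x).IsHermitian := by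
    intro k x
    have h1 : (Alim x).IsHermitian := by
      rw [Matrix.IsHermitian, Matrix.conjTranspose_eq_transpose_of_trivial]; exact hlimsymm x
    have h2 : (A k x).IsHermitian := by
      rw [Matrix.IsHermitian, Matrix.conjTranspose_eq_transpose_of_trivial]; exact hAsymm k x
    exact h1.sub h2
  have hlimdiff : ∀ (k : ℕ) (x : K), (Alim x - A k x).PosSemidef := by
    intro k x
    refine Matrix.PosSemidef.of_dotProduct_mulVec_nonneg (hherm k x) fun v => ?_
    have hq : ∀ M : Matrix (Fin n) (Fin n) ℝ,
        dotProduct (star v) (M *ᵥ v) = ∑ i, ∑ j, v i * (M i j * v j) := by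
      intro M
      simp [dotProduct, Matrix.mulVec, Finset.mul_sum]
    rw [hq]
    have ht : Tendsto (fun l => ∑ i, ∑ j, v i * ((A l x - A k x) i j * v j)) atTop
        (𝓝 (∑ i, ∑ j, v i * ((Alim x - A k x) i j * v j))) := by
      refine tendsto_finset_sum _ fun i _ => tendsto_finset_sum _ fun j _ => ?_
      refine Tendsto.const_mul _ (Tendsto.mul_const _ ?_)
      simpa [Matrix.sub_apply] using (hentry x i j).sub tendsto_const_nhds
    refine ge_of_tendsto ht ?_
    filter_upwards [eventually_ge_atTop k] with l hl
    have := (hdiff k l hl x).dotProduct_mulVec_nonneg v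
    rwa [hq] at this
  have htrA : ∀ k, Continuous fun x => (A k x).trace := by
    intro k
    have heq : (fun x => (A k x).trace) = fun x => ∑ i, (A k x) i i := by
      funext x; simp [Matrix.trace, Matrix.diag]
    rw [heq]
    exact continuous_finset_sum _ fun i _ => (dl_entry_lip i i).continuous.comp (hAcont k)
  have htrmono : ∀ (k l : ℕ), k ≤ l → ∀ x, (A k x).trace ≤ (A l x).trace := by
    intro k l hkl x
    have h := dl_psd_trace_nonneg (hdiff k l hkl x)
    rw [Matrix.trace_sub] at h
    linarith
  have hgt : ∀ x, Tendsto (fun k => (Alim x).trace - (A k x).trace) atTop (𝓝 0) := by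
    intro x
    have h1 : Tendsto (fun k => (A k x).trace) atTop (𝓝 (Alim x).trace) := by
      have he : ∀ M : Matrix (Fin n) (Fin n) ℝ, M.trace = ∑ i, M i i := fun M => by
        simp [Matrix.trace, Matrix.diag]
      simp only [he]
      exact tendsto_finset_sum _ fun i _ => hentry x i i
    simpa using (tendsto_const_nhds (x := (Alim x).trace)).sub h1
  have htu : TendstoUniformly A Alim atTop := by
    refine Metric.tendstoUniformly_iff.2 ?_
    intro ε hε
    set U : ℕ → Set K := fun N => {x | (Alim x).trace - (A N x).trace < ε} with hU
    have hopen : ∀ N, IsOpen (U N) := fun N =>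
      isOpen_lt (htrcont.sub (htrA N)) continuous_const
    have hcover : (Set.univ : Set K) ⊆ ⋃ N, U N := by
      intro x _
      obtain ⟨N, hN⟩ := ((hgt x).eventually (gt_mem_nhds hε)).exists
      exact Set.mem_iUnion.2 ⟨N, hN⟩
    obtain ⟨t, ht⟩ := isCompact_univ.elim_finite_subcover U hopen hcover
    refine eventually_atTop.2 ⟨t.sup id, fun k hk x => ?_⟩
    obtain ⟨i, hit, hix⟩ := Set.mem_iUnion₂.1 (ht (Set.mem_univ x))
    have hik : i ≤ k := le_trans (Finset.le_sup (f := id) hit) hk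
    have hix' : (Alim x).trace - (A i x).trace < ε := hix
    have hgle : (Alim x).trace - (A k x).trace < ε := by
      have := htrmono i k hik x; linarith
    have hnorm : dist (Alim x) (A k x) ≤ (Alim x).trace - (A k x).trace := by
      rw [dist_eq_norm]
      have h := dl_psd_norm_le_trace (hlimdiff k x)
      rwa [Matrix.trace_sub] at h
    exact lt_of_le_of_lt hnorm hgle
  exact ⟨htu, htu.continuous (Eventually.of_forall hAcont).frequently⟩
end

section
/- Let n ≥ 1, α > 0, β ≠ 0, and let A, B be real symmetric n×n matrices such that A is negative semidefinite, V := B − A is positive semidefinite, trace A = −α, trace B = α, and det V = β. Then β > 0, the operator norm of A satisfies ‖A‖ ≤ α, and ⟪V·x, x⟫ ≥ β·(2·α)^(1−n)·‖x‖² for all x ∈ ℝⁿ, where ⟪·,·⟫ and ‖·‖ are the Euclidean inner product and norm. -/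
open Matrix Finset

variable {n : ℕ}

lemma eig_decomp (M : Matrix (Fin n) (Fin n) ℝ) (hM : M.IsHermitian) (x : Fin n → ℝ) :
    ∃ y : Fin n → ℝ,
      x ⬝ᵥ x = ∑ i, y i ^ 2 ∧
      (M *ᵥ x) ⬝ᵥ x = ∑ i, hM.eigenvalues i * y i ^ 2 ∧
      (M *ᵥ x) ⬝ᵥ (M *ᵥ x) = ∑ i, (hM.eigenvalues i) ^ 2 * y i ^ 2 := by
  set U : Matrix (Fin n) (Fin n) ℝ := (hM.eigenvectorUnitary : Matrix (Fin n) (Fin n) ℝ) with hU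
  have hUU : star U * U = 1 := mem_unitaryGroup_iff'.mp hM.eigenvectorUnitary.2
  have hst : star U = Uᵀ := conjTranspose_eq_transpose_of_trivial U
  have hiso : ∀ u v : Fin n → ℝ, (U *ᵥ u) ⬝ᵥ (U *ᵥ v) = u ⬝ᵥ v := by
    intro u v
    rw [dotProduct_mulVec, vecMul_mulVec, ← hst, hUU, vecMul_one]
  set y : Fin n → ℝ := star U *ᵥ x with hy
  have hDdef : M = U * diagonal hM.eigenvalues * star U := by
    have := hM.spectral_theorem
    simpa [RCLike.ofReal_real_eq_id] using this
  have hxy : x = U *ᵥ y := by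
    rw [hy, mulVec_mulVec, mul_eq_one_comm.mp hUU, one_mulVec]
  have hMx : M *ᵥ x = U *ᵥ (diagonal hM.eigenvalues *ᵥ y) := by
    conv_lhs => rw [hDdef]
    rw [← mulVec_mulVec, ← mulVec_mulVec]
  refine ⟨y, ?_, ?_, ?_⟩
  · calc x ⬝ᵥ x = (U *ᵥ y) ⬝ᵥ (U *ᵥ y) := by rw [← hxy]
      _ = y ⬝ᵥ y := hiso y y
      _ = ∑ i, y i ^ 2 := by simp [dotProduct, pow_two]
  · calc (M *ᵥ x) ⬝ᵥ x = (U *ᵥ (diagonal hM.eigenvalues *ᵥ y)) ⬝ᵥ (U *ᵥ y) := by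
          rw [← hMx, ← hxy]
      _ = (diagonal hM.eigenvalues *ᵥ y) ⬝ᵥ y := hiso _ _
      _ = ∑ i, hM.eigenvalues i * y i ^ 2 := by
          simp only [dotProduct, mulVec_diagonal]
          exact Finset.sum_congr rfl fun i _ => by ring
  · calc (M *ᵥ x) ⬝ᵥ (M *ᵥ x)
        = (U *ᵥ (diagonal hM.eigenvalues *ᵥ y)) ⬝ᵥ (U *ᵥ (diagonal hM.eigenvalues *ᵥ y)) := by
          rw [← hMx]
      _ = (diagonal hM.eigenvalues *ᵥ y) ⬝ᵥ (diagonal hM.eigenvalues *ᵥ y) := hiso _ _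
      _ = ∑ i, (hM.eigenvalues i) ^ 2 * y i ^ 2 := by
          simp only [dotProduct, mulVec_diagonal]
          exact Finset.sum_congr rfl fun i _ => by ring


lemma trace_eq_sum_eigs (M : Matrix (Fin n) (Fin n) ℝ) (hM : M.IsHermitian) :
    M.trace = ∑ i, hM.eigenvalues i := by
  conv_lhs => rw [hM.spectral_theorem]
  rw [Unitary.conjStarAlgAut_apply, trace_mul_cycle, mem_unitaryGroup_iff'.mp hM.eigenvectorUnitary.2, one_mul, trace_diagonal]
  simp [RCLike.ofReal_real_eq_id]

lemma euc_norm_sq (z : EuclideanSpace ℝ (Fin n)) :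
    ‖z‖ ^ 2 = (WithLp.equiv 2 _ z) ⬝ᵥ (WithLp.equiv 2 _ z) := by
  rw [EuclideanSpace.norm_eq, Real.sq_sqrt (by positivity)]
  simp [dotProduct, Real.norm_eq_abs, sq_abs, pow_two]

lemma eig_nonpos_of_quad (M : Matrix (Fin n) (Fin n) ℝ) (hM : M.IsHermitian)
    (h : ∀ x : Fin n → ℝ, (M *ᵥ x) ⬝ᵥ x ≤ 0) (i : Fin n) : hM.eigenvalues i ≤ 0 := by
  rw [hM.eigenvalues_eq]
  simpa [dotProduct_comm] using h (hM.eigenvectorBasis i)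

lemma eig_nonneg_of_quad (M : Matrix (Fin n) (Fin n) ℝ) (hM : M.IsHermitian)
    (h : ∀ x : Fin n → ℝ, 0 ≤ (M *ᵥ x) ⬝ᵥ x) (i : Fin n) : 0 ≤ hM.eigenvalues i := by
  rw [hM.eigenvalues_eq]
  simpa [dotProduct_comm] using h (hM.eigenvectorBasis i)


/-- The final estimate in the proof of Theorem 1.2: if `A` is symmetric negative
semidefinite with `trace A = −α`, `B` is symmetric with `trace B = α`, `V = B − A` is
positive semidefinite with `det V = β ≠ 0`, then `β > 0`, `‖A‖ ≤ α`, and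
`⟪V·x, x⟫ ≥ β·(2α)^(1−n)·‖x‖²` for all `x`. -/
theorem bolton_criterion_estimates (n : ℕ) (hn : 1 ≤ n) (α β : ℝ)
    (hα : 0 < α) (hβ : β ≠ 0)
    (A B : Matrix (Fin n) (Fin n) ℝ)
    (hAsymm : A.IsSymm) (hBsymm : B.IsSymm)
    (hAneg : ∀ x : Fin n → ℝ, (A *ᵥ x) ⬝ᵥ x ≤ 0)
    (hVpos : ∀ x : Fin n → ℝ, 0 ≤ ((B - A) *ᵥ x) ⬝ᵥ x)
    (htrA : A.trace = -α) (htrB : B.trace = α)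
    (hdet : (B - A).det = β) :
    0 < β ∧ ‖Matrix.toEuclideanCLM (𝕜 := ℝ) A‖ ≤ α ∧
      ∀ x : Fin n → ℝ, β * (2 * α) ^ (1 - (n : ℤ)) * (x ⬝ᵥ x) ≤ ((B - A) *ᵥ x) ⬝ᵥ x := by
  have hAherm : A.IsHermitian := by
    rwa [IsHermitian, conjTranspose_eq_transpose_of_trivial]
  have hVherm : (B - A).IsHermitian := by
    rw [IsHermitian, conjTranspose_eq_transpose_of_trivial]
    exact hBsymm.sub hAsymm
  set lam := hVherm.eigenvalues with hlam
  set mu := hAherm.eigenvalues with hmu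
  -- basic eigenvalue facts
  have hlam0 : ∀ i, 0 ≤ lam i := eig_nonneg_of_quad _ hVherm hVpos
  have hmu0 : ∀ i, 0 ≤ -mu i := fun i =>
    neg_nonneg.mpr (eig_nonpos_of_quad _ hAherm hAneg i)
  have hsumlam : ∑ i, lam i = 2 * α := by
    have := (trace_eq_sum_eigs _ hVherm).symm
    rw [this, trace_sub, htrA, htrB]; ring
  have hsummu : ∑ i, mu i = -α := by
    rw [← trace_eq_sum_eigs _ hAherm, htrA]
  have hprod : ∏ i, lam i = β := by
    have h := hVherm.det_eq_prod_eigenvalues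
    rw [hdet] at h
    simpa using h.symm
  have hβpos : 0 < β := by
    have h0 : 0 ≤ β := hprod ▸ prod_nonneg (fun i _ => hlam0 i)
    exact h0.lt_of_ne (Ne.symm hβ)
  have hlampos : ∀ i, 0 < lam i := fun i => by
    rcases (hlam0 i).lt_or_eq with h | h
    · exact h
    · exfalso; apply hβ
      rw [← hprod, ← Finset.prod_eq_zero (Finset.mem_univ i) h.symm]
  have hlamle : ∀ i, lam i ≤ 2 * α := fun i => by
    rw [← hsumlam]
    exact Finset.single_le_sum (fun j _ => hlam0 j) (Finset.mem_univ i)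
  have hmule : ∀ i, -mu i ≤ α := fun i => by
    have h : ∑ j, -mu j = α := by rw [Finset.sum_neg_distrib, hsummu]; ring
    rw [← h]
    exact Finset.single_le_sum (fun j _ => hmu0 j) (Finset.mem_univ i)
  refine ⟨hβpos, ?_, ?_⟩
  · refine ContinuousLinearMap.opNorm_le_bound _ hα.le (fun z => ?_)
    have hz2 : ‖toEuclideanCLM (𝕜 := ℝ) A z‖ ^ 2 ≤ (α * ‖z‖) ^ 2 := by
      rw [euc_norm_sq, mul_pow, euc_norm_sq, (show ∀ w : EuclideanSpace ℝ (Fin n), WithLp.equiv 2 _ (toEuclideanCLM (𝕜 := ℝ) A w) = toLin' A (WithLp.equiv 2 _ w) from fun w => rfl), toLin'_apply]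
      obtain ⟨y, h1, h3big⟩ := (eig_decomp A hAherm (WithLp.equiv 2 _ z))
      obtain ⟨h2, h3⟩ := h3big
      rw [h3, h1, Finset.mul_sum]
      apply Finset.sum_le_sum; intro i _
      have hsq : mu i ^ 2 ≤ α ^ 2 := by
        have h := hmule i; have h0 := hmu0 i
        nlinarith
      nlinarith [sq_nonneg (y i)]
    have h0 : (0:ℝ) ≤ α * ‖z‖ := by positivity
    nlinarith [norm_nonneg (toEuclideanCLM (𝕜 := ℝ) A z)]
  · intro x
    obtain ⟨y, h1, h2, _⟩ := eig_decomp (B - A) hVherm x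
    have hP : (0:ℝ) < (2*α) ^ (n-1) := by positivity
    have hc : β * (2*α) ^ (1-(n:ℤ)) = β / (2*α)^(n-1) := by
      rw [div_eq_mul_inv]; congr 1
      have hexp : (1 - (n:ℤ)) = -((n-1 : ℕ) : ℤ) := by omega
      rw [hexp, _root_.zpow_neg, zpow_natCast]
    have hcle : ∀ i, β / (2*α)^(n-1) ≤ lam i := fun i => by
      rw [div_le_iff₀ hP]
      calc β = lam i * ∏ j ∈ univ.erase i, lam j := by
            rw [← hprod]; exact (Finset.mul_prod_erase univ lam (mem_univ i)).symm
        _ ≤ lam i * (2*α)^(n-1) := by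
            refine mul_le_mul_of_nonneg_left ?_ (hlam0 i)
            calc ∏ j ∈ univ.erase i, lam j ≤ ∏ _j ∈ univ.erase i, (2*α) :=
                  Finset.prod_le_prod (fun j _ => hlam0 j) (fun j _ => hlamle j)
              _ = (2*α)^(n-1) := by
                  rw [Finset.prod_const, card_erase_of_mem (mem_univ i), card_univ,
                    Fintype.card_fin]
    rw [hc, h1, h2, Finset.mul_sum]
    apply Finset.sum_le_sum; intro i _
    exact mul_le_mul_of_nonneg_right (hcle i) (sq_nonneg _)
end
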